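/- arXiv:1003.1488 — 4 statements merged into one kernel-verified Lean document; each statement's English description precedes it below -/
import Mathlib

section
/- For two density operators ρ₁, ρ₂ with apriori probabilities η₁, η₂ (η₁+η₂=1), the minimum over POVMs {E₁, E₂} (E₁, E₂ ≥ 0, E₁+E₂ = I) of the error probability 1 − η₁ tr(E₁ρ₁) − η₂ tr(E₂ρ₂) equals (1 − ‖η₁ρ₁ − η₂ρ₂‖₁)/2, where ‖·‖₁ is the trace norm. -/
open Matrix ComplexOrder Kronecker BigOperators

/-- Trace norm: tr|X| = tr √(Xᴴ X). -/
noncomputable def traceNorm {n : Type*} [Fintype n] [DecidableEq n] (X : Matrix n n ℂ) : ℝ :=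
  (((Matrix.posSemidef_conjTranspose_mul_self X).isHermitian.eigenvectorUnitary : Matrix n n ℂ) *
    diagonal (((↑) : ℝ → ℂ) ∘ (√·) ∘ (Matrix.posSemidef_conjTranspose_mul_self X).isHermitian.eigenvalues) *
    (star (Matrix.posSemidef_conjTranspose_mul_self X).isHermitian.eigenvectorUnitary :
      Matrix n n ℂ)).trace.re

open scoped MatrixOrder in
lemma traceNorm_eq_sqrt {n : Type*} [Fintype n] [DecidableEq n] (X : Matrix n n ℂ) :
    traceNorm X = (CFC.sqrt (Xᴴ * X)).trace.re := by
  have h0 : (0 : Matrix n n ℂ) ≤ Xᴴ * X := (Matrix.posSemidef_conjTranspose_mul_self X).nonneg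
  rw [CFC.sqrt_eq_real_sqrt _ h0, cfcₙ_eq_cfc (hf0 := by simp),
    (Matrix.posSemidef_conjTranspose_mul_self X).isHermitian.cfc_eq, IsHermitian.cfc,
    Unitary.conjStarAlgAut_apply]
  rfl

open scoped MatrixOrder in
lemma traceNorm_of_sq_eq {n : Type*} [Fintype n] [DecidableEq n] (X B : Matrix n n ℂ)
    (hB : B.PosSemidef) (h : B ^ 2 = Xᴴ * X) : traceNorm X = B.trace.re := by
  rw [traceNorm_eq_sqrt, (CFC.sqrt_eq_iff _ _ (Matrix.posSemidef_conjTranspose_mul_self X).nonneg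
    hB.nonneg).mpr (by rw [← h, pow_two])]

lemma psd_diag_re_nonneg {n : Type*} [Fintype n] [DecidableEq n] {M : Matrix n n ℂ}
    (hM : M.PosSemidef) (i : n) : 0 ≤ (M i i).re := by
  exact (Complex.nonneg_iff.mp hM.diag_nonneg).1

theorem stmt2 {d : ℕ} (ρ₁ ρ₂ : Matrix (Fin d) (Fin d) ℂ)
    (hρ₁ : ρ₁.PosSemidef) (hρ₂ : ρ₂.PosSemidef)
    (htr₁ : ρ₁.trace = 1) (htr₂ : ρ₂.trace = 1)
    (η₁ η₂ : ℝ) (hη₁ : 0 ≤ η₁) (hη₂ : 0 ≤ η₂) (hsum : η₁ + η₂ = 1) :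
    IsLeast {x : ℝ | ∃ E₁ E₂ : Matrix (Fin d) (Fin d) ℂ,
        E₁.PosSemidef ∧ E₂.PosSemidef ∧ E₁ + E₂ = 1 ∧
        x = 1 - η₁ * ((E₁ * ρ₁).trace).re - η₂ * ((E₂ * ρ₂).trace).re}
      ((1 - traceNorm ((η₁ : ℂ) • ρ₁ - (η₂ : ℂ) • ρ₂)) / 2) := by
  set Δ : Matrix (Fin d) (Fin d) ℂ := (η₁ : ℂ) • ρ₁ - (η₂ : ℂ) • ρ₂ with hΔdef
  have hΔ : Δ.IsHermitian := by
    have h : Δᴴ = Δ := by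
      simp [hΔdef, conjTranspose_sub, conjTranspose_smul, hρ₁.1.eq, hρ₂.1.eq,
        Complex.star_def, Complex.conj_ofReal]
    exact h
  set U : Matrix (Fin d) (Fin d) ℂ := (hΔ.eigenvectorUnitary : Matrix (Fin d) (Fin d) ℂ) with hUdef
  set lam : Fin d → ℝ := hΔ.eigenvalues with hlamdef
  have hU1 : star U * U = 1 := Unitary.coe_star_mul_self hΔ.eigenvectorUnitary
  have hU2 : U * star U = 1 := mem_unitaryGroup_iff.mp hΔ.eigenvectorUnitary.2
  set C : (Fin d → ℂ) → Matrix (Fin d) (Fin d) ℂ :=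
    fun f => U * Matrix.diagonal f * star U with hC
  have hCmul : ∀ f g, C f * C g = C (f * g) := fun f g => by
    simp only [hC, Matrix.mul_assoc]
    rw [← Matrix.mul_assoc (star U) U, hU1, one_mul, ← Matrix.mul_assoc (Matrix.diagonal f),
      Matrix.diagonal_mul_diagonal]
    rfl
  have hCtr : ∀ f, (C f).trace = ∑ i, f i := fun f => by
    simp only [hC]
    rw [Matrix.trace_mul_cycle, hU1, one_mul, Matrix.trace_diagonal]
  have hCpsd : ∀ f : Fin d → ℝ, (∀ i, 0 ≤ f i) →
      (C (fun i => (f i : ℂ))).PosSemidef := fun f hf => by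
    have h1 : (Matrix.diagonal (fun i => (f i : ℂ))).PosSemidef :=
      Matrix.posSemidef_diagonal_iff.mpr fun i => Complex.zero_le_real.mpr (hf i)
    simpa only [hC, Matrix.star_eq_conjTranspose] using h1.mul_mul_conjTranspose_same U
  have hCsub : ∀ f g, C f - C g = C (f - g) := fun f g => by
    simp only [hC]
    rw [show (f - g) = (fun i => f i - g i) from rfl, ← Matrix.diagonal_sub,
      Matrix.mul_sub, Matrix.sub_mul]
  have hspec : Δ = C (fun i => (lam i : ℂ)) := hΔ.spectral_theorem
  have hone : (1 : Matrix (Fin d) (Fin d) ℂ) = C (fun _ => 1) := by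
    simp only [hC, Matrix.diagonal_one, mul_one, hU2]
  -- trace of Δ
  have hsumlam : ∑ i, lam i = η₁ - η₂ := by
    have h2 : Δ.trace = ∑ i, (lam i : ℂ) := by rw [hspec]; exact hCtr _
    have h1 : Δ.trace = (η₁ : ℂ) - η₂ := by
      simp [hΔdef, Matrix.trace_sub, Matrix.trace_smul, htr₁, htr₂, smul_eq_mul]
    rw [h1] at h2
    have h3 : ((∑ i, lam i : ℝ) : ℂ) = ((η₁ - η₂ : ℝ) : ℂ) := by push_cast; rw [← h2]
    exact_mod_cast h3
  -- trace norm of Δ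
  have habs : traceNorm Δ = ∑ i, |lam i| := by
    have hC1 : (C (fun i => ((|lam i| : ℝ) : ℂ))).PosSemidef :=
      hCpsd _ (fun i => abs_nonneg _)
    have hfun : (fun i => ((|lam i| : ℝ) : ℂ)) * (fun i => ((|lam i| : ℝ) : ℂ))
        = (fun i => ((lam i : ℝ) : ℂ)) * (fun i => ((lam i : ℝ) : ℂ)) := by
      funext i
      simp only [Pi.mul_apply, ← Complex.ofReal_mul, abs_mul_abs_self]
    have hsq : (C (fun i => ((|lam i| : ℝ) : ℂ))) ^ 2 = Δᴴ * Δ := by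
      rw [pow_two, hCmul, hΔ.eq, hspec, hCmul, hfun]
    have heq := traceNorm_of_sq_eq Δ _ hC1 hsq
    rw [heq, hCtr, Complex.re_sum]
    simp
  -- key algebraic reduction
  have hkey : ∀ E₁ E₂ : Matrix (Fin d) (Fin d) ℂ, E₁ + E₂ = 1 →
      1 - η₁ * ((E₁ * ρ₁).trace).re - η₂ * ((E₂ * ρ₂).trace).re
        = η₁ - ((E₁ * Δ).trace).re := by
    intro E₁ E₂ hE
    have hE₂ : E₂ = 1 - E₁ := by rw [← hE]; abel
    have h1 : (E₁ * Δ).trace = (η₁ : ℂ) * (E₁ * ρ₁).trace - (η₂ : ℂ) * (E₁ * ρ₂).trace := by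
      simp [hΔdef, Matrix.mul_sub, Matrix.mul_smul, Matrix.trace_sub, Matrix.trace_smul,
        smul_eq_mul]
    have h2 : (E₂ * ρ₂).trace = 1 - (E₁ * ρ₂).trace := by
      rw [hE₂, Matrix.sub_mul, Matrix.one_mul, Matrix.trace_sub, htr₂]
    rw [h1, h2]
    simp only [Complex.sub_re, Complex.one_re, Complex.re_ofReal_mul]
    linarith
  have hmaxr : ∀ r : ℝ, max r 0 = (r + |r|) / 2 := fun r => by
    rcases le_total 0 r with h | h
    · rw [max_eq_left h, abs_of_nonneg h]; ring
    · rw [max_eq_right h, abs_of_nonpos h]; ring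
  have hsummax : ∑ i, max (lam i) 0 = ((η₁ - η₂) + ∑ i, |lam i|) / 2 := by
    simp_rw [hmaxr]
    rw [← Finset.sum_div, Finset.sum_add_distrib, hsumlam]
  constructor
  · -- membership: the optimal POVM
    set chi : Fin d → ℝ := fun i => if 0 ≤ lam i then 1 else 0 with hchi
    have hchi01 : ∀ i, 0 ≤ chi i ∧ chi i ≤ 1 := fun i => by
      simp only [hchi]; split <;> norm_num
    set E₁ : Matrix (Fin d) (Fin d) ℂ := C (fun i => (chi i : ℂ)) with hE₁def
    have hE₁psd : E₁.PosSemidef := hCpsd _ fun i => (hchi01 i).1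
    have hE₂eq : (1 : Matrix (Fin d) (Fin d) ℂ) - E₁ = C (fun i => ((1 - chi i : ℝ) : ℂ)) := by
      rw [hone, hE₁def, hCsub]
      apply congrArg
      funext i
      simp
    have hE₂psd : ((1 : Matrix (Fin d) (Fin d) ℂ) - E₁).PosSemidef := by
      rw [hE₂eq]; exact hCpsd _ fun i => by linarith [(hchi01 i).2]
    refine ⟨E₁, 1 - E₁, hE₁psd, hE₂psd, by abel, ?_⟩
    rw [hkey E₁ (1 - E₁) (by abel)]
    have hval : ((E₁ * Δ).trace).re = ∑ i, max (lam i) 0 := by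
      rw [hspec, hE₁def, hCmul, hCtr, Complex.re_sum]
      apply Finset.sum_congr rfl
      intro i _
      simp only [Pi.mul_apply, hchi]
      rcases le_or_gt 0 (lam i) with h | h
      · rw [if_pos h, max_eq_left h]; simp
      · rw [if_neg (not_le.mpr h), max_eq_right h.le]; simp
    rw [hval, habs, hsummax]
    linarith
  · -- lower bound
    rintro x ⟨E₁, E₂, h1, h2, h3, rfl⟩
    rw [hkey E₁ E₂ h3, habs]
    set M : Matrix (Fin d) (Fin d) ℂ := star U * E₁ * U with hMdef
    have hMpsd : M.PosSemidef := by
      simpa only [hMdef, Matrix.star_eq_conjTranspose] using h1.conjTranspose_mul_mul_same U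
    have hNpsd : ((1 : Matrix (Fin d) (Fin d) ℂ) - M).PosSemidef := by
      have hE₂ : E₂ = 1 - E₁ := by rw [← h3]; abel
      have heq : (1 : Matrix (Fin d) (Fin d) ℂ) - M = star U * E₂ * U := by
        rw [hE₂, hMdef]
        simp [Matrix.mul_sub, Matrix.sub_mul, hU1]
      rw [heq]
      simpa only [Matrix.star_eq_conjTranspose] using h2.conjTranspose_mul_mul_same U
    have hdiag : ∀ i, 0 ≤ (M i i).re ∧ (M i i).re ≤ 1 := by
      intro i
      refine ⟨psd_diag_re_nonneg hMpsd i, ?_⟩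
      have h := psd_diag_re_nonneg hNpsd i
      simp only [Matrix.sub_apply, Matrix.one_apply_eq, Complex.sub_re, Complex.one_re] at h
      linarith
    have htrM : (E₁ * Δ).trace = ∑ i, M i i * (lam i : ℂ) := by
      rw [hspec]
      simp only [hC, ← Matrix.mul_assoc]
      rw [Matrix.trace_mul_cycle (E₁ * U) (Matrix.diagonal fun i => (lam i : ℂ)) (star U),
        ← Matrix.mul_assoc]
      simp [Matrix.trace, Matrix.diag, Matrix.mul_apply, Matrix.diagonal_apply, mul_ite,
        mul_zero, Finset.sum_ite_eq, hMdef]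
    have hre : ((E₁ * Δ).trace).re = ∑ i, (M i i).re * lam i := by
      rw [htrM, Complex.re_sum]
      apply Finset.sum_congr rfl
      intro i _
      simp [Complex.mul_re]
    have hbound : ∑ i, (M i i).re * lam i ≤ ∑ i, max (lam i) 0 := by
      apply Finset.sum_le_sum
      intro i _
      obtain ⟨h0, h1l⟩ := hdiag i
      rcases le_total 0 (lam i) with h | h
      · calc (M i i).re * lam i ≤ 1 * lam i := mul_le_mul_of_nonneg_right h1l h
          _ = lam i := one_mul _
          _ ≤ max (lam i) 0 := le_max_left _ _
      · calc (M i i).re * lam i ≤ 0 := mul_nonpos_of_nonneg_of_nonpos h0 h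
          _ ≤ max (lam i) 0 := le_max_right _ _
    rw [hre]
    linarith [hsummax, hbound]
end

section
/- Two unitary channels U·U† and V·V† on a d-dimensional Hilbert space can be perfectly discriminated with a single use (possibly with an entangled test state) if and only if 0 lies in the convex hull of the eigenvalues of U†V, i.e., if and only if min over density operators ξ of |tr(ξ U†V)| = 0. -/
open Matrix ComplexOrder Kronecker BigOperators

private noncomputable def xi {d : ℕ} (ψ : Fin d × Fin d → ℂ) : Matrix (Fin d) (Fin d) ℂ :=
  Matrix.of fun a b => ∑ i, ψ (i, a) * star (ψ (i, b))

private lemma xi_posSemidef {d : ℕ} (ψ : Fin d × Fin d → ℂ) : (xi ψ).PosSemidef := by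
  have : xi ψ = (Matrix.of fun (i a : Fin d) => star (ψ (i, a)))ᴴ *
      (Matrix.of fun (i a : Fin d) => star (ψ (i, a))) := by
    ext a b
    simp [xi, Matrix.mul_apply, Matrix.conjTranspose_apply]
  rw [this]
  exact Matrix.posSemidef_conjTranspose_mul_self _

private lemma xi_trace {d : ℕ} (ψ : Fin d × Fin d → ℂ) :
    (xi ψ).trace = star ψ ⬝ᵥ ψ := by
  simp only [Matrix.trace, Matrix.diag, xi, Matrix.of_apply, dotProduct, Pi.star_apply,
    Fintype.sum_prod_type]
  rw [Finset.sum_comm]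
  exact Finset.sum_congr rfl fun a _ => Finset.sum_congr rfl fun i _ => by ring

private lemma kron_conjTranspose {d : ℕ} (U : Matrix (Fin d) (Fin d) ℂ) :
    ((1 : Matrix (Fin d) (Fin d) ℂ) ⊗ₖ U)ᴴ = (1 : Matrix (Fin d) (Fin d) ℂ) ⊗ₖ Uᴴ := by
  ext ⟨i, j⟩ ⟨k, l⟩
  by_cases h : i = k <;>
    simp [Matrix.conjTranspose_apply, Matrix.one_apply, h, eq_comm]

private lemma dot_kron {d : ℕ} (W : Matrix (Fin d) (Fin d) ℂ) (ψ : Fin d × Fin d → ℂ) :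
    star ψ ⬝ᵥ ((1 : Matrix (Fin d) (Fin d) ℂ) ⊗ₖ W).mulVec ψ = (xi ψ * W).trace := by
  have L : star ψ ⬝ᵥ ((1 : Matrix (Fin d) (Fin d) ℂ) ⊗ₖ W).mulVec ψ
      = ∑ i, ∑ a, ∑ b, star (ψ (i, a)) * W a b * ψ (i, b) := by
    simp [dotProduct, Matrix.mulVec, Matrix.kroneckerMap_apply, Matrix.one_apply,
      Fintype.sum_prod_type, Finset.mul_sum, ite_mul, mul_assoc]
  have R : (xi ψ * W).trace = ∑ a, ∑ b, ∑ i, star (ψ (i, b)) * W b a * ψ (i, a) := by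
    simp only [Matrix.trace, Matrix.diag, Matrix.mul_apply, xi, Matrix.of_apply,
      Finset.sum_mul]
    exact Finset.sum_congr rfl fun a _ => Finset.sum_congr rfl fun b _ =>
      Finset.sum_congr rfl fun i _ => by ring
  rw [L, R]
  conv_rhs => rw [Finset.sum_comm]
  rw [Finset.sum_comm]
  exact Finset.sum_congr rfl fun a _ => Finset.sum_comm

private lemma inner_eq {d : ℕ} (U V : Matrix (Fin d) (Fin d) ℂ) (ψ : Fin d × Fin d → ℂ) :
    star (((1 : Matrix (Fin d) (Fin d) ℂ) ⊗ₖ U).mulVec ψ) ⬝ᵥ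
      ((1 : Matrix (Fin d) (Fin d) ℂ) ⊗ₖ V).mulVec ψ = (xi ψ * (Uᴴ * V)).trace := by
  rw [Matrix.star_mulVec, Matrix.dotProduct_mulVec, Matrix.vecMul_vecMul,
    kron_conjTranspose, ← Matrix.mul_kronecker_mul, one_mul, ← Matrix.dotProduct_mulVec,
    dot_kron]

private lemma xi_of_sqrt {d : ℕ} (B : Matrix (Fin d) (Fin d) ℂ) :
    xi (fun p : Fin d × Fin d => star (B p.1 p.2)) = Bᴴ * B := by
  ext a b
  simp [xi, Matrix.mul_apply, Matrix.conjTranspose_apply, mul_comm]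

theorem stmt12 {d : ℕ} (U V : Matrix (Fin d) (Fin d) ℂ)
    (hU : U ∈ Matrix.unitaryGroup (Fin d) ℂ) (hV : V ∈ Matrix.unitaryGroup (Fin d) ℂ) :
    (∃ ψ : Fin d × Fin d → ℂ, star ψ ⬝ᵥ ψ = 1 ∧
        star (((1 : Matrix (Fin d) (Fin d) ℂ) ⊗ₖ U).mulVec ψ) ⬝ᵥ
          ((1 : Matrix (Fin d) (Fin d) ℂ) ⊗ₖ V).mulVec ψ = 0) ↔
      (∃ ξ : Matrix (Fin d) (Fin d) ℂ, ξ.PosSemidef ∧ ξ.trace = 1 ∧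
        (ξ * (Uᴴ * V)).trace = 0) := by
  constructor
  · rintro ⟨ψ, hψ, h0⟩
    exact ⟨xi ψ, xi_posSemidef ψ, by rw [xi_trace, hψ], by rw [← inner_eq, h0]⟩
  · rintro ⟨ξ, hpsd, htr, h0⟩
    obtain ⟨B, rfl⟩ : ∃ B : Matrix (Fin d) (Fin d) ℂ, ξ = Bᴴ * B := by
      open scoped MatrixOrder Matrix.Norms.L2Operator in
      exact CStarAlgebra.nonneg_iff_eq_star_mul_self.mp hpsd.nonneg
    refine ⟨fun p => star (B p.1 p.2), ?_, ?_⟩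
    · rw [← xi_trace, xi_of_sqrt, htr]
    · rw [inner_eq, xi_of_sqrt, h0]
end

section
/- For unitary operators U, V on a 2-dimensional Hilbert space, the minimum over density operators ξ of |tr(ξ U†V)| equals ½|tr(U†V)|, provided the two eigenvalues e^{iθ_1}, e^{iθ_2} of U†V satisfy that 0 is not in their convex hull (which for two points on the unit circle fails only when they are antipodal, where both sides equal 0). In all cases the minimum equals ½|e^{iθ_1} + e^{iθ_2}| = ½|tr(U†V)|. -/
open Matrix ComplexOrder

lemma key_ineq (a b : ℂ) (p q : ℝ) (hpq : p + q = 1)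
    (hab : Complex.normSq a = Complex.normSq b) :
    ‖a + b‖ / 2 ≤ ‖(p : ℂ) * a + (q : ℂ) * b‖ := by
  have hq : q = 1 - p := by linarith
  subst hq
  rw [div_le_iff₀ (by norm_num : (0:ℝ) < 2)]
  have hns : ∀ z : ℂ, ‖z‖ ^ 2 = Complex.normSq z := fun z => by
    rw [Complex.sq_norm]
  have h : ‖a + b‖ ^ 2 ≤ (‖(p : ℂ) * a + ((1 - p : ℝ) : ℂ) * b‖ * 2) ^ 2 := by
    rw [mul_pow, hns, hns]
    have hab2 : (2*p - 1)^2 * (a.re * a.re + a.im * a.im)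
        = (2*p - 1)^2 * (b.re * b.re + b.im * b.im) := by
      simp only [Complex.normSq_apply] at hab; rw [hab]
    simp only [Complex.normSq_apply, Complex.add_re, Complex.add_im, Complex.mul_re,
      Complex.mul_im, Complex.ofReal_re, Complex.ofReal_im]
    nlinarith [sq_nonneg ((2*p - 1) * (a.re - b.re)), sq_nonneg ((2*p - 1) * (a.im - b.im)), hab2]
  nlinarith [norm_nonneg (a + b), norm_nonneg ((p : ℂ) * a + ((1 - p : ℝ) : ℂ) * b), h]

theorem stmt13 (U V : Matrix (Fin 2) (Fin 2) ℂ)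
    (hU : U ∈ Matrix.unitaryGroup (Fin 2) ℂ) (hV : V ∈ Matrix.unitaryGroup (Fin 2) ℂ) :
    IsLeast {x : ℝ | ∃ ξ : Matrix (Fin 2) (Fin 2) ℂ,
        ξ.PosSemidef ∧ ξ.trace = 1 ∧ x = ‖(ξ * (Uᴴ * V)).trace‖}
      (‖(Uᴴ * V).trace‖ / 2) := by
  constructor
  · refine ⟨Matrix.diagonal (fun _ => (1/2 : ℂ)), ?_, ?_, ?_⟩
    · refine Matrix.posSemidef_diagonal_iff.mpr fun i => ?_
      rw [Complex.le_def]
      norm_num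
    · simp [Matrix.trace_diagonal, Fin.sum_univ_two]
    · have hd : Matrix.diagonal (fun _ : Fin 2 => (1/2 : ℂ)) = (1/2 : ℂ) • 1 := by
        simp [Matrix.smul_one_eq_diagonal]
      rw [hd, Matrix.smul_mul, Matrix.trace_smul, norm_smul]
      norm_num
      ring
  · rintro x ⟨ξ, hps, htr, rfl⟩
    set W := Uᴴ * V with hWdef
    have hW : W ∈ Matrix.unitaryGroup (Fin 2) ℂ := mul_mem (Unitary.star_mem hU) hV
    have hH := hps.1
    set P : Matrix (Fin 2) (Fin 2) ℂ := ↑(hH.eigenvectorUnitary) with hPdef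
    have hP : P ∈ Matrix.unitaryGroup (Fin 2) ℂ := hH.eigenvectorUnitary.2
    set M : Matrix (Fin 2) (Fin 2) ℂ := star P * W * P with hMdef
    have hM : M ∈ Matrix.unitaryGroup (Fin 2) ℂ :=
      mul_mem (mul_mem (Unitary.star_mem hP) hW) hP
    set d : Fin 2 → ℝ := hH.eigenvalues with hddef
    have hPsP : star P * P = 1 := Matrix.mem_unitaryGroup_iff'.mp hP
    have hPPs : P * star P = 1 := Matrix.mem_unitaryGroup_iff.mp hP
    -- trace of ξ * W
    have e1 : (ξ * W).trace = (d 0 : ℂ) * M 0 0 + (d 1 : ℂ) * M 1 1 := by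
      conv_lhs => rw [hH.spectral_theorem, Unitary.conjStarAlgAut_apply]
      simp only [Matrix.mul_assoc]
      rw [Matrix.trace_mul_comm]
      simp only [Matrix.mul_assoc, ← hPdef, ← hMdef]
      simp [Matrix.trace_fin_two, Matrix.diagonal_mul, hMdef, Matrix.mul_assoc, hddef]
    -- trace of ξ
    have e2 : (d 0 : ℝ) + d 1 = 1 := by
      rw [hH.spectral_theorem, Unitary.conjStarAlgAut_apply, Matrix.trace_mul_cycle] at htr
      rw [← hPdef, hPsP, Matrix.one_mul, Matrix.trace_diagonal, Fin.sum_univ_two] at htr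
      simp only [Function.comp_apply] at htr
      rw [hddef]
      exact RCLike.ofReal_injective (K := ℂ) (by simpa using htr)
    -- trace of W equals trace of M
    have e3 : W.trace = M 0 0 + M 1 1 := by
      rw [← Matrix.trace_fin_two, hMdef, Matrix.trace_mul_cycle, ← Matrix.mul_assoc, hPPs,
        Matrix.one_mul]
    -- normSq equality of diagonal entries of M
    have hMM : M * star M = 1 := Matrix.mem_unitaryGroup_iff.mp hM
    have hMM' : star M * M = 1 := Matrix.mem_unitaryGroup_iff'.mp hM
    have h1 := congrFun (congrFun hMM 0) 0
    have h2 := congrFun (congrFun hMM' 1) 1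
    simp only [Matrix.mul_apply, Fin.sum_univ_two, Matrix.one_apply_eq, Matrix.star_apply, RCLike.star_def,
      Complex.mul_conj, ← Complex.normSq_eq_conj_mul_self] at h1 h2
    have hab : Complex.normSq (M 0 0) = Complex.normSq (M 1 1) := by
      have h3 : Complex.normSq (M 0 0) + Complex.normSq (M 0 1)
          = Complex.normSq (M 0 1) + Complex.normSq (M 1 1) := by
        exact_mod_cast h1.trans h2.symm
      linarith
    rw [e1, e3]
    exact key_ineq (M 0 0) (M 1 1) (d 0) (d 1) e2 hab
end

section
/- Let ψ_U, ψ_V be unit vectors with overlap γ = |⟨ψ_U|ψ_V⟩| < 1, and η_U ≥ η_V > 0 with η_U + η_V = 1. The maximal success probability of unambiguous discrimination (over effects F_U, F_V ≥ 0 with F_U + F_V ≤ I, ⟨ψ_V|F_U|ψ_V⟩ = ⟨ψ_U|F_V|ψ_U⟩ = 0) satisfies: the failure probability equals 2√(η_Uη_V)γ if γ ≤ √(η_V/η_U), and equals η_V + η_U γ² if γ ≥ √(η_V/η_U). -/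
open Matrix ComplexOrder

namespace Stmt15Aux
variable {n : ℕ}

noncomputable def outer (v : Fin n → ℂ) : Matrix (Fin n) (Fin n) ℂ :=
  vecMulVec v (star v)

lemma outer_herm (v : Fin n → ℂ) : (outer v).IsHermitian := by
  ext i j
  simp [outer, vecMulVec, Matrix.conjTranspose_apply, mul_comm]

lemma outer_mulVec (v x : Fin n → ℂ) : (outer v) *ᵥ x = (star v ⬝ᵥ x) • v := by
  ext i
  simp [outer, vecMulVec, mulVec, dotProduct, Finset.mul_sum, Pi.smul_apply, smul_eq_mul,
    mul_comm, mul_assoc, mul_left_comm]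

lemma star_dp (v w : Fin n → ℂ) : star (star v ⬝ᵥ w) = star w ⬝ᵥ v := by
  simp [dotProduct, Finset.sum_comm, map_sum, mul_comm]

lemma quad_outer (v x : Fin n → ℂ) :
    star x ⬝ᵥ ((outer v) *ᵥ x) = (Complex.normSq (star v ⬝ᵥ x) : ℂ) := by
  rw [outer_mulVec, dotProduct_smul]
  have h : star x ⬝ᵥ v = star (star v ⬝ᵥ x) := (star_dp v x).symm
  rw [smul_eq_mul, mul_comm, h, Complex.star_def, mul_comm, Complex.mul_conj]

lemma psd_smul_outer (v : Fin n → ℂ) (c : ℝ) (hc : 0 ≤ c) :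
    ((c : ℂ) • outer v).PosSemidef := by
  refine Matrix.PosSemidef.of_dotProduct_mulVec_nonneg ?_ ?_
  · unfold Matrix.IsHermitian
    rw [conjTranspose_smul, outer_herm v]
    simp [Complex.star_def]
  · intro x
    rw [Matrix.smul_mulVec, dotProduct_smul, smul_eq_mul, quad_outer]
    rw [show ((c:ℂ) * (Complex.normSq (star v ⬝ᵥ x) : ℂ)) =
      ((c * Complex.normSq (star v ⬝ᵥ x) : ℝ) : ℂ) by push_cast; ring]
    rw [Complex.zero_le_real]
    exact mul_nonneg hc (Complex.normSq_nonneg _)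

lemma psd_outer (v : Fin n → ℂ) : (outer v).PosSemidef := by
  have h := psd_smul_outer v 1 zero_le_one
  simpa using h

lemma quad_smul_outer (v x : Fin n → ℂ) (c : ℝ) :
    star x ⬝ᵥ ((c : ℂ) • outer v) *ᵥ x = ((c * Complex.normSq (star v ⬝ᵥ x) : ℝ) : ℂ) := by
  rw [Matrix.smul_mulVec, dotProduct_smul, smul_eq_mul, quad_outer]
  push_cast
  ring

lemma dp_self_re (x : Fin n → ℂ) : star x ⬝ᵥ x = ((star x ⬝ᵥ x).re : ℂ) := by
  have h := dotProduct_star_self_nonneg x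
  rw [Complex.nonneg_iff] at h
  exact Complex.ext rfl (by simp [h.2])

lemma psd_one_sub (v1 v2 : Fin n → ℂ) (r1 r2 : ℝ)
    (H : ∀ x : Fin n → ℂ, r1 * Complex.normSq (star v1 ⬝ᵥ x) +
        r2 * Complex.normSq (star v2 ⬝ᵥ x) ≤ (star x ⬝ᵥ x).re) :
    ((1 : Matrix (Fin n) (Fin n) ℂ) - (r1:ℂ) • outer v1 - (r2:ℂ) • outer v2).PosSemidef := by
  refine Matrix.PosSemidef.of_dotProduct_mulVec_nonneg ?_ ?_
  · unfold Matrix.IsHermitian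
    rw [conjTranspose_sub, conjTranspose_sub, conjTranspose_smul, conjTranspose_smul,
      conjTranspose_one, (outer_herm v1), (outer_herm v2)]
    simp [Complex.star_def]
  · intro x
    rw [sub_mulVec, sub_mulVec, dotProduct_sub, dotProduct_sub, one_mulVec,
      Matrix.smul_mulVec, Matrix.smul_mulVec, dotProduct_smul, dotProduct_smul,
      quad_outer, quad_outer, smul_eq_mul, smul_eq_mul, dp_self_re x]
    have := H x
    have h2 : ((((star x ⬝ᵥ x).re : ℝ) : ℂ)) - (r1:ℂ) * (Complex.normSq (star v1 ⬝ᵥ x) : ℂ)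
        - (r2:ℂ) * (Complex.normSq (star v2 ⬝ᵥ x) : ℂ)
        = (((star x ⬝ᵥ x).re - r1 * Complex.normSq (star v1 ⬝ᵥ x)
            - r2 * Complex.normSq (star v2 ⬝ᵥ x) : ℝ) : ℂ) := by push_cast; ring
    rw [h2]
    rw [Complex.zero_le_real]
    linarith

lemma bessel1 (u1 x : Fin n → ℂ) (h11 : star u1 ⬝ᵥ u1 = 1) :
    Complex.normSq (star u1 ⬝ᵥ x) ≤ (star x ⬝ᵥ x).re := by
  set α := star u1 ⬝ᵥ x with hα
  set y : Fin n → ℂ := x - α • u1 with hy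
  have hxu1 : star x ⬝ᵥ u1 = star α := (star_dp u1 x).symm
  have key : star y ⬝ᵥ y = star x ⬝ᵥ x - (Complex.normSq α : ℂ) := by
    simp only [hy, star_sub, star_smul, sub_dotProduct, dotProduct_sub, smul_dotProduct,
      dotProduct_smul, h11, hxu1, smul_eq_mul]
    rw [show star u1 ⬝ᵥ x = α from rfl, Complex.normSq_eq_conj_mul_self]
    simp [Complex.star_def]
  have h0 := dotProduct_star_self_nonneg y
  rw [key, Complex.nonneg_iff] at h0
  have := h0.1
  simp only [Complex.sub_re, Complex.ofReal_re] at this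
  linarith

lemma bessel2 (u1 u2 x : Fin n → ℂ) (s2 : ℝ) (hs : 0 < s2)
    (h11 : star u1 ⬝ᵥ u1 = 1) (h22 : star u2 ⬝ᵥ u2 = (s2:ℂ))
    (h12 : star u1 ⬝ᵥ u2 = 0) :
    Complex.normSq (star u1 ⬝ᵥ x) + Complex.normSq (star u2 ⬝ᵥ x) / s2 ≤ (star x ⬝ᵥ x).re := by
  set α := star u1 ⬝ᵥ x with hα
  set β := star u2 ⬝ᵥ x with hβ
  set y : Fin n → ℂ := x - α • u1 - (β / (s2:ℂ)) • u2 with hy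
  have h21 : star u2 ⬝ᵥ u1 = 0 := by
    have h := star_dp u1 u2; rw [h12] at h; simpa using h.symm
  have hxu1 : star x ⬝ᵥ u1 = star α := (star_dp u1 x).symm
  have hxu2 : star x ⬝ᵥ u2 = star β := (star_dp u2 x).symm
  have hns : ∀ z : ℂ, star z * z = (Complex.normSq z : ℂ) := by
    intro z; rw [Complex.star_def, mul_comm, Complex.mul_conj]
  have hs0 : (s2 : ℂ) ≠ 0 := by exact_mod_cast ne_of_gt hs
  have key : star y ⬝ᵥ y = star x ⬝ᵥ x - (Complex.normSq α : ℂ) - (Complex.normSq β : ℂ) / (s2:ℂ) := by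
    simp only [hy, star_sub, star_smul, sub_dotProduct, dotProduct_sub, smul_dotProduct,
      dotProduct_smul, h11, h22, h12, h21, hxu1, hxu2, smul_eq_mul, star_div₀, Complex.star_def,
      Complex.conj_ofReal]
    rw [show star u1 ⬝ᵥ x = α from rfl, show star u2 ⬝ᵥ x = β from rfl,
      Complex.normSq_eq_conj_mul_self, Complex.normSq_eq_conj_mul_self]
    field_simp
    ring
  have h0 := dotProduct_star_self_nonneg y
  rw [key, Complex.nonneg_iff] at h0
  have hre : (star x ⬝ᵥ x - (Complex.normSq α : ℂ) - (Complex.normSq β : ℂ) / (s2:ℂ)).re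
      = (star x ⬝ᵥ x).re - Complex.normSq α - Complex.normSq β / s2 := by
    rw [show ((Complex.normSq β : ℂ) / (s2:ℂ)) = ((Complex.normSq β / s2 : ℝ) : ℂ) by push_cast; ring]
    simp
  rw [hre] at h0
  linarith [h0.1]

lemma dp_cs (p q : Fin n → ℂ) :
    ‖star p ⬝ᵥ q‖ ^ 2 ≤ (star p ⬝ᵥ p).re * (star q ⬝ᵥ q).re := by
  have h := @norm_inner_le_norm ℂ (EuclideanSpace ℂ (Fin n)) _ _ _
    ((WithLp.equiv 2 _).symm p) ((WithLp.equiv 2 _).symm q)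
  have E : ∀ x y : Fin n → ℂ, inner ℂ ((WithLp.equiv 2 (Fin n → ℂ)).symm x)
      ((WithLp.equiv 2 (Fin n → ℂ)).symm y) = star x ⬝ᵥ y := by
    intro x y; simp [EuclideanSpace.inner_toLp_toLp, dotProduct_comm]
  rw [E] at h
  have hp : (star p ⬝ᵥ p).re = ‖(WithLp.equiv 2 _).symm p‖ ^ 2 := by
    rw [← E]
    exact_mod_cast (@inner_self_eq_norm_sq ℂ _ _ _ _ ((WithLp.equiv 2 _).symm p))
  have hq : (star q ⬝ᵥ q).re = ‖(WithLp.equiv 2 _).symm q‖ ^ 2 := by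
    rw [← E]
    exact_mod_cast (@inner_self_eq_norm_sq ℂ _ _ _ _ ((WithLp.equiv 2 _).symm q))
  rw [hp, hq]
  nlinarith [norm_nonneg (star p ⬝ᵥ q), norm_nonneg ((WithLp.equiv 2 (Fin n → ℂ)).symm p),
    norm_nonneg ((WithLp.equiv 2 (Fin n → ℂ)).symm q)]

lemma psd_cs {M : Matrix (Fin n) (Fin n) ℂ} (hM : M.PosSemidef) (u v : Fin n → ℂ) :
    ‖star u ⬝ᵥ M *ᵥ v‖ ^ 2 ≤ (star u ⬝ᵥ M *ᵥ u).re * (star v ⬝ᵥ M *ᵥ v).re := by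
  obtain ⟨B, rfl⟩ : ∃ B : Matrix (Fin n) (Fin n) ℂ, M = Bᴴ * B := by
    open scoped MatrixOrder in exact CStarAlgebra.nonneg_iff_eq_star_mul_self.mp hM.nonneg
  have key : ∀ a b : Fin n → ℂ, star a ⬝ᵥ (Bᴴ * B) *ᵥ b = star (B *ᵥ a) ⬝ᵥ (B *ᵥ b) := by
    intro a b
    rw [← mulVec_mulVec, dotProduct_mulVec, ← star_mulVec]
  rw [key, key, key]
  exact dp_cs _ _

lemma lower_core (ψU ψV : Fin n → ℂ) (hψU : star ψU ⬝ᵥ ψU = 1) (hψV : star ψV ⬝ᵥ ψV = 1)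
    (FU FV : Matrix (Fin n) (Fin n) ℂ) (hFU : FU.PosSemidef) (hFV : FV.PosSemidef)
    (hQ : (1 - FU - FV).PosSemidef)
    (h1 : star ψV ⬝ᵥ FU.mulVec ψV = 0) (h2 : star ψU ⬝ᵥ FV.mulVec ψU = 0) :
    ‖star ψU ⬝ᵥ ψV‖ ^ 2 ≤
      (1 - (star ψU ⬝ᵥ FU.mulVec ψU).re) * (1 - (star ψV ⬝ᵥ FV.mulVec ψV).re) ∧
    0 ≤ (star ψU ⬝ᵥ FU.mulVec ψU).re ∧ (star ψU ⬝ᵥ FU.mulVec ψU).re ≤ 1 ∧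
    0 ≤ (star ψV ⬝ᵥ FV.mulVec ψV).re ∧ (star ψV ⬝ᵥ FV.mulVec ψV).re ≤ 1 := by
  have hFUV : FU *ᵥ ψV = 0 := (hFU.dotProduct_mulVec_zero_iff ψV).mp h1
  have hFVU : FV *ᵥ ψU = 0 := (hFV.dotProduct_mulVec_zero_iff ψU).mp h2
  have cZ1 : star ψU ⬝ᵥ FU *ᵥ ψV = 0 := by rw [hFUV]; simp
  have cZ2 : star ψU ⬝ᵥ FV *ᵥ ψV = 0 := by
    rw [dotProduct_mulVec, ← hFV.1, ← star_mulVec, hFVU]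
    simp
  have qUV : star ψU ⬝ᵥ (1 - FU - FV) *ᵥ ψV = star ψU ⬝ᵥ ψV := by
    rw [sub_mulVec, sub_mulVec, one_mulVec, dotProduct_sub, dotProduct_sub, cZ1, cZ2]
    ring
  have qUU : star ψU ⬝ᵥ (1 - FU - FV) *ᵥ ψU = 1 - star ψU ⬝ᵥ FU *ᵥ ψU := by
    rw [sub_mulVec, sub_mulVec, one_mulVec, dotProduct_sub, dotProduct_sub, hψU, h2]
    ring
  have qVV : star ψV ⬝ᵥ (1 - FU - FV) *ᵥ ψV = 1 - star ψV ⬝ᵥ FV *ᵥ ψV := by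
    rw [sub_mulVec, sub_mulVec, one_mulVec, dotProduct_sub, dotProduct_sub, hψV, h1]
    ring
  have hcs := psd_cs hQ ψU ψV
  rw [qUV, qUU, qVV] at hcs
  simp only [Complex.sub_re, Complex.one_re] at hcs
  have hpU0 : 0 ≤ (star ψU ⬝ᵥ FU *ᵥ ψU).re := (Complex.nonneg_iff.mp (hFU.dotProduct_mulVec_nonneg ψU)).1
  have hpV0 : 0 ≤ (star ψV ⬝ᵥ FV *ᵥ ψV).re := (Complex.nonneg_iff.mp (hFV.dotProduct_mulVec_nonneg ψV)).1
  have hqU0 : 0 ≤ (star ψU ⬝ᵥ (1 - FU - FV) *ᵥ ψU).re := (Complex.nonneg_iff.mp (hQ.dotProduct_mulVec_nonneg ψU)).1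
  have hqV0 : 0 ≤ (star ψV ⬝ᵥ (1 - FU - FV) *ᵥ ψV).re := (Complex.nonneg_iff.mp (hQ.dotProduct_mulVec_nonneg ψV)).1
  rw [qUU] at hqU0; rw [qVV] at hqV0
  simp only [Complex.sub_re, Complex.one_re] at hqU0 hqV0
  exact ⟨hcs, hpU0, by linarith, hpV0, by linarith⟩

lemma arith1 (ηU ηV γ A B : ℝ) (hU0 : 0 < ηU) (hV0 : 0 < ηV) (hγ : 0 ≤ γ)
    (hA : 0 ≤ A) (hB : 0 ≤ B) (hAB : γ ^ 2 ≤ A * B) :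
    2 * Real.sqrt (ηU * ηV) * γ ≤ ηU * A + ηV * B := by
  set p := Real.sqrt (ηU * A) with hp
  set q := Real.sqrt (ηV * B) with hq
  have hp2 : p ^ 2 = ηU * A := Real.sq_sqrt (by positivity)
  have hq2 : q ^ 2 = ηV * B := Real.sq_sqrt (by positivity)
  have h1 : Real.sqrt (ηU * ηV) * γ = Real.sqrt (ηU * ηV * γ ^ 2) := by
    rw [Real.sqrt_mul (by positivity) (γ ^ 2), Real.sqrt_sq hγ]
  have h2 : Real.sqrt (ηU * ηV * γ ^ 2) ≤ Real.sqrt (ηU * A * (ηV * B)) :=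
    Real.sqrt_le_sqrt (by nlinarith [mul_pos hU0 hV0])
  have h3 : Real.sqrt (ηU * A * (ηV * B)) = p * q := Real.sqrt_mul (by positivity) _
  nlinarith [sq_nonneg (p - q), Real.sqrt_nonneg (ηU * ηV), Real.sqrt_nonneg (ηU * A),
    Real.sqrt_nonneg (ηV * B)]

lemma arith2 (ηU ηV γ A B : ℝ) (hU0 : 0 < ηU) (hV0 : 0 < ηV)
    (hA : A ≤ 1) (hB0 : 0 ≤ B) (hB : B ≤ 1) (hAB : γ ^ 2 ≤ A * B)
    (hγV : ηV ≤ ηU * γ ^ 2) :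
    ηV + ηU * γ ^ 2 ≤ ηU * A + ηV * B := by
  have hγpos : 0 < γ ^ 2 := by nlinarith
  have hBpos : 0 < B := by nlinarith
  have key : 0 ≤ (1 - B) * (ηU * γ ^ 2 - ηV * B) := by
    apply mul_nonneg (by linarith)
    nlinarith
  nlinarith [mul_nonneg hU0.le (sub_nonneg.mpr hAB)]

lemma arith3 (γ s2 a b u v R : ℝ) (hγ : 0 ≤ γ) (hs2 : s2 = 1 - γ ^ 2) (hs2pos : 0 < s2)
    (hab : a * b = γ ^ 2) (ha0 : 0 ≤ a) (hb0 : 0 ≤ b) (hb1 : b ≤ 1)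
    (hR1 : -(γ * u * v) ≤ R) (hR2 : R ≤ γ * u * v) :
    (1 - a) / s2 ^ 2 * v ^ 2 + (1 - b) / s2 ^ 2 * (s2 ^ 2 * u ^ 2 + γ ^ 2 * v ^ 2 - 2 * s2 * R)
      ≤ u ^ 2 + v ^ 2 / s2 := by
  have key : (1 - a) * v ^ 2 + (1 - b) * (s2 ^ 2 * u ^ 2 + γ ^ 2 * v ^ 2 - 2 * s2 * R)
      ≤ s2 ^ 2 * u ^ 2 + s2 * v ^ 2 := by
    rcases eq_or_lt_of_le hb0 with hb | hb
    · have hγ0 : γ = 0 := by nlinarith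
      subst hs2
      rw [hγ0] at hR1 hR2 ⊢
      have hR0 : R = 0 := le_antisymm (by simpa using hR2) (by simpa using hR1)
      rw [← hb, hR0]
      nlinarith
    · subst hs2
      nlinarith [sq_nonneg (b * (1 - γ ^ 2) * u - (1 - b) * γ * v),
        mul_nonneg (mul_nonneg (mul_nonneg hb0 (sub_nonneg.mpr hb1)) hs2pos.le)
          (by linarith : (0:ℝ) ≤ R + γ * u * v), hb, sq_nonneg v, sq_nonneg u]
  have hs4 : (0:ℝ) < s2 ^ 2 := by positivity
  have h2 : ((1 - a) * v ^ 2 + (1 - b) * (s2 ^ 2 * u ^ 2 + γ ^ 2 * v ^ 2 - 2 * s2 * R)) / s2 ^ 2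
      ≤ (s2 ^ 2 * u ^ 2 + s2 * v ^ 2) / s2 ^ 2 := by
    exact div_le_div_of_nonneg_right key hs4.le
  have e1 : ((1 - a) * v ^ 2 + (1 - b) * (s2 ^ 2 * u ^ 2 + γ ^ 2 * v ^ 2 - 2 * s2 * R)) / s2 ^ 2
      = (1 - a) / s2 ^ 2 * v ^ 2 + (1 - b) / s2 ^ 2 * (s2 ^ 2 * u ^ 2 + γ ^ 2 * v ^ 2 - 2 * s2 * R) := by
    ring
  have e2 : (s2 ^ 2 * u ^ 2 + s2 * v ^ 2) / s2 ^ 2 = u ^ 2 + v ^ 2 / s2 := by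
    field_simp
  rw [e1, e2] at h2
  exact h2


end Stmt15Aux
open Stmt15Aux in
theorem stmt15 {n : ℕ} (ψU ψV : Fin n → ℂ)
    (hψU : star ψU ⬝ᵥ ψU = 1) (hψV : star ψV ⬝ᵥ ψV = 1)
    (hover : ‖star ψU ⬝ᵥ ψV‖ < 1)
    (ηU ηV : ℝ) (hV0 : 0 < ηV) (hUV : ηV ≤ ηU) (hsum : ηU + ηV = 1) :
    (‖star ψU ⬝ᵥ ψV‖ ≤ Real.sqrt (ηV / ηU) →
      IsLeast {x : ℝ | ∃ FU FV : Matrix (Fin n) (Fin n) ℂ,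
          FU.PosSemidef ∧ FV.PosSemidef ∧ (1 - FU - FV).PosSemidef ∧
          star ψV ⬝ᵥ FU.mulVec ψV = 0 ∧ star ψU ⬝ᵥ FV.mulVec ψU = 0 ∧
          x = 1 - ηU * (star ψU ⬝ᵥ FU.mulVec ψU).re - ηV * (star ψV ⬝ᵥ FV.mulVec ψV).re}
        (2 * Real.sqrt (ηU * ηV) * ‖star ψU ⬝ᵥ ψV‖)) ∧
    (Real.sqrt (ηV / ηU) ≤ ‖star ψU ⬝ᵥ ψV‖ →
      IsLeast {x : ℝ | ∃ FU FV : Matrix (Fin n) (Fin n) ℂ,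
          FU.PosSemidef ∧ FV.PosSemidef ∧ (1 - FU - FV).PosSemidef ∧
          star ψV ⬝ᵥ FU.mulVec ψV = 0 ∧ star ψU ⬝ᵥ FV.mulVec ψU = 0 ∧
          x = 1 - ηU * (star ψU ⬝ᵥ FU.mulVec ψU).re - ηV * (star ψV ⬝ᵥ FV.mulVec ψV).re}
        (ηV + ηU * ‖star ψU ⬝ᵥ ψV‖ ^ 2)) := by
  have hU0 : 0 < ηU := lt_of_lt_of_le hV0 hUV
  set δ := star ψU ⬝ᵥ ψV with hδdef
  set γ := ‖δ‖ with hγdef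
  have hγ0 : 0 ≤ γ := norm_nonneg _
  have hγ1 : γ < 1 := hover
  have hγns : Complex.normSq δ = γ ^ 2 := by
    rw [Complex.normSq_eq_norm_sq]
  set s2 : ℝ := 1 - γ ^ 2 with hs2def
  have hs2 : 0 < s2 := by nlinarith
  have hVU : star ψV ⬝ᵥ ψU = star δ := (star_dp ψU ψV).symm
  have hδsq : δ * star δ = ((γ ^ 2 : ℝ) : ℂ) := by
    rw [Complex.star_def, Complex.mul_conj, hγns]
  have hδsq' : star δ * δ = ((γ ^ 2 : ℝ) : ℂ) := by rw [mul_comm]; exact hδsq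
  set t := Real.sqrt (ηV / ηU) with htdef
  have ht0 : 0 < t := Real.sqrt_pos.mpr (by positivity)
  have ht2 : t ^ 2 = ηV / ηU := Real.sq_sqrt (by positivity)
  have ht1 : t ≤ 1 := by
    rw [htdef, show (1:ℝ) = Real.sqrt 1 by simp]
    exact Real.sqrt_le_sqrt (by rw [div_le_one hU0]; exact hUV)
  have hUt : ηU * t = Real.sqrt (ηU * ηV) := by
    rw [show ηU * ηV = ηU ^ 2 * (ηV / ηU) from by field_simp,
      Real.sqrt_mul (sq_nonneg ηU), Real.sqrt_sq hU0.le, htdef]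
  have hVt : Real.sqrt (ηU * ηV) * t = ηV := by
    rw [htdef, ← Real.sqrt_mul (by positivity),
      show ηU * ηV * (ηV / ηU) = ηV ^ 2 from by field_simp, Real.sqrt_sq hV0.le]
  constructor
  · -- Case 1 : γ ≤ t
    intro hc
    constructor
    · -- membership : optimal construction
      set a := γ * t with hadef
      set b := γ / t with hbdef
      have hab : a * b = γ ^ 2 := by rw [hadef, hbdef]; field_simp
      have ha0 : 0 ≤ a := mul_nonneg hγ0 ht0.le
      have hb0 : 0 ≤ b := div_nonneg hγ0 ht0.le
      have hb1 : b ≤ 1 := by rw [hbdef, div_le_one ht0]; exact hc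
      have ha1 : a ≤ 1 := by
        rw [hadef]
        calc γ * t ≤ 1 * 1 := by
              apply mul_le_mul hγ1.le ht1 ht0.le zero_le_one
        _ = 1 := by ring
      set cU := (1 - a) / s2 ^ 2 with hcUdef
      set cV := (1 - b) / s2 ^ 2 with hcVdef
      have hcU0 : 0 ≤ cU := div_nonneg (by linarith) (by positivity)
      have hcV0 : 0 ≤ cV := div_nonneg (by linarith) (by positivity)
      set f : Fin n → ℂ := ψU - (star δ) • ψV with hfdef
      set g : Fin n → ℂ := ψV - δ • ψU with hgdef
      have hsf : star f = star ψU - δ • star ψV := by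
        rw [hfdef, star_sub, star_smul, star_star]
      have hsg : star g = star ψV - star δ • star ψU := by
        rw [hgdef, star_sub, star_smul]
      have hfV : star f ⬝ᵥ ψV = 0 := by
        rw [hsf, sub_dotProduct, smul_dotProduct, hψV, smul_eq_mul, mul_one, ← hδdef, sub_self]
      have hfU : star f ⬝ᵥ ψU = ((s2 : ℝ) : ℂ) := by
        rw [hsf, sub_dotProduct, smul_dotProduct, hψU, hVU, smul_eq_mul, hδsq, hs2def]
        push_cast
        ring
      have hff : star f ⬝ᵥ f = ((s2 : ℝ) : ℂ) := by
        rw [hfdef, dotProduct_sub, dotProduct_smul, hfU, hfV, smul_eq_mul, mul_zero, sub_zero]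
      have hVf : star ψV ⬝ᵥ f = 0 := by
        have h := star_dp f ψV; rw [hfV] at h; simpa using h.symm
      have hgU : star g ⬝ᵥ ψU = 0 := by
        rw [hsg, sub_dotProduct, smul_dotProduct, hψU, hVU, smul_eq_mul, mul_one, sub_self]
      have hψUx : ∀ x, star f ⬝ᵥ x = star ψU ⬝ᵥ x - δ * (star ψV ⬝ᵥ x) := by
        intro x
        rw [hsf, sub_dotProduct, smul_dotProduct, smul_eq_mul]
      have hs2c : ((s2 : ℝ) : ℂ) = 1 - ((γ ^ 2 : ℝ) : ℂ) := by
        rw [hs2def]; push_cast; ring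
      have hgx : ∀ x, star g ⬝ᵥ x = ((s2 : ℝ) : ℂ) * (star ψV ⬝ᵥ x) - star δ * (star f ⬝ᵥ x) := by
        intro x
        rw [hsg, sub_dotProduct, smul_dotProduct, smul_eq_mul, hψUx x, hs2c]
        linear_combination -(star ψV ⬝ᵥ x) * hδsq'
      refine ⟨(cU : ℂ) • outer f, (cV : ℂ) • outer g,
        psd_smul_outer f cU hcU0, psd_smul_outer g cV hcV0, ?_, ?_, ?_, ?_⟩
      · -- 1 - FU - FV PSD
        apply psd_one_sub
        intro x
        have hbes := bessel2 ψV f x s2 hs2 hψV hff hVf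
        set u := ‖star ψV ⬝ᵥ x‖ with hudef
        set v := ‖star f ⬝ᵥ x‖ with hvdef
        have hnsα : Complex.normSq (star ψV ⬝ᵥ x) = u ^ 2 := by
          rw [Complex.normSq_eq_norm_sq, hudef]
        have hnsβ : Complex.normSq (star f ⬝ᵥ x) = v ^ 2 := by
          rw [Complex.normSq_eq_norm_sq, hvdef]
        set R := ((star ψV ⬝ᵥ x) * (δ * (starRingEnd ℂ) (star f ⬝ᵥ x))).re with hRdef
        have hg2 : Complex.normSq (star g ⬝ᵥ x)
            = s2 ^ 2 * u ^ 2 + γ ^ 2 * v ^ 2 - 2 * (s2 * R) := by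
          rw [hgx x, Complex.normSq_sub, Complex.normSq_mul, Complex.normSq_mul,
            Complex.normSq_ofReal, hnsα, hnsβ]
          rw [show Complex.normSq (star δ) = γ ^ 2 from by
            rw [Complex.star_def, Complex.normSq_conj, hγns]]
          rw [show ((((s2:ℝ):ℂ) * (star ψV ⬝ᵥ x)) * (starRingEnd ℂ) (star δ * (star f ⬝ᵥ x)))
              = ((s2:ℝ):ℂ) * ((star ψV ⬝ᵥ x) * (δ * (starRingEnd ℂ) (star f ⬝ᵥ x))) from by
            rw [_root_.map_mul, Complex.star_def, Complex.conj_conj]; ring]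
          rw [Complex.re_ofReal_mul, ← hRdef]
          ring
        have hRabs : |R| ≤ γ * u * v := by
          have h1 : |R| ≤ ‖(star ψV ⬝ᵥ x) * (δ * (starRingEnd ℂ) (star f ⬝ᵥ x))‖ := by
            rw [hRdef]
            exact Complex.abs_re_le_norm _
          have h2 : ‖(star ψV ⬝ᵥ x) * (δ * (starRingEnd ℂ) (star f ⬝ᵥ x))‖ = u * (γ * v) := by
            rw [norm_mul, norm_mul, RCLike.norm_conj]
          rw [h2] at h1
          linarith [h1]
        have hRb := abs_le.mp hRabs
        have harr := arith3 γ s2 a b u v R hγ0 hs2def hs2 hab ha0 hb0 hb1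
          (by linarith [hRb.1]) (by linarith [hRb.2])
        rw [hnsα, hnsβ] at hbes
        rw [hnsβ, hg2, hcUdef, hcVdef]
        calc (1 - a) / s2 ^ 2 * v ^ 2 + (1 - b) / s2 ^ 2 *
              (s2 ^ 2 * u ^ 2 + γ ^ 2 * v ^ 2 - 2 * (s2 * R))
            = (1 - a) / s2 ^ 2 * v ^ 2 + (1 - b) / s2 ^ 2 *
              (s2 ^ 2 * u ^ 2 + γ ^ 2 * v ^ 2 - 2 * s2 * R) := by ring
          _ ≤ u ^ 2 + v ^ 2 / s2 := harr
          _ ≤ (star x ⬝ᵥ x).re := hbes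
      · -- no error on ψV
        rw [quad_smul_outer, hfV]
        simp
      · -- no error on ψU
        rw [quad_smul_outer, hgU]
        simp
      · -- value
        rw [quad_smul_outer, quad_smul_outer, hfU]
        rw [show star g ⬝ᵥ ψV = ((s2 : ℝ) : ℂ) from by
          rw [hgx ψV, hψV, hfV, mul_one, mul_zero, sub_zero]]
        rw [Complex.normSq_ofReal]
        have hgen : ∀ c : ℝ, c / s2 ^ 2 * (s2 * s2) = c := by
          intro c
          rw [div_mul_eq_mul_div, show s2 * s2 = s2 ^ 2 by ring, mul_div_assoc,
            div_self (pow_ne_zero 2 hs2.ne'), mul_one]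
        have hcUs : cU * (s2 * s2) = 1 - a := by rw [hcUdef]; exact hgen _
        have hcVs : cV * (s2 * s2) = 1 - b := by rw [hcVdef]; exact hgen _
        rw [Complex.ofReal_re, Complex.ofReal_re, hcUs, hcVs]
        have h1 : ηU * a = Real.sqrt (ηU * ηV) * γ := by
          rw [hadef, ← hUt]; ring
        have h2 : ηV * b = Real.sqrt (ηU * ηV) * γ := by
          rw [hbdef]
          nth_rewrite 1 [← hVt]
          rw [mul_assoc, mul_div_assoc', mul_div_cancel_left₀ _ ht0.ne']
        linarith
    · -- lower bound
      rintro x ⟨FU, FV, hFU, hFV, hQ, h1, h2, rfl⟩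
      obtain ⟨hcs, hp0, hp1, hq0, hq1⟩ :=
        lower_core ψU ψV hψU hψV FU FV hFU hFV hQ h1 h2
      have := arith1 ηU ηV γ (1 - (star ψU ⬝ᵥ FU.mulVec ψU).re)
        (1 - (star ψV ⬝ᵥ FV.mulVec ψV).re) hU0 hV0 hγ0 (by linarith) (by linarith) hcs
      linarith
  · -- Case 2 : t ≤ γ
    intro hc
    constructor
    · -- membership
      refine ⟨1 - outer ψV, 0, ?_, ?_, ?_, ?_, ?_, ?_⟩
      · have h := psd_one_sub ψV 0 1 0 (fun x => by simpa using bessel1 ψV x hψV)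
        simpa using h
      · exact Matrix.PosSemidef.zero
      · rw [sub_zero, sub_sub_cancel]
        exact psd_outer ψV
      · rw [sub_mulVec, one_mulVec, dotProduct_sub, quad_outer, hψV]
        simp
      · simp
      · rw [sub_mulVec, one_mulVec, dotProduct_sub, quad_outer, hVU, hψU]
        rw [show Complex.normSq (star δ) = γ ^ 2 from by
          rw [Complex.star_def, Complex.normSq_conj, hγns]]
        rw [show ((1 : ℂ) - ((γ ^ 2 : ℝ) : ℂ)) = ((1 - γ ^ 2 : ℝ) : ℂ) from by push_cast; ring]
        simp only [Complex.ofReal_re, Matrix.zero_mulVec, dotProduct_zero, Complex.zero_re]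
        linarith
    · -- lower bound
      rintro x ⟨FU, FV, hFU, hFV, hQ, h1, h2, rfl⟩
      obtain ⟨hcs, hp0, hp1, hq0, hq1⟩ :=
        lower_core ψU ψV hψU hψV FU FV hFU hFV hQ h1 h2
      have hγV : ηV ≤ ηU * γ ^ 2 := by
        have ht2' : t ^ 2 ≤ γ ^ 2 := pow_le_pow_left₀ ht0.le hc 2
        rw [ht2] at ht2'
        calc ηV = ηU * (ηV / ηU) := by field_simp
        _ ≤ ηU * γ ^ 2 := by
            apply mul_le_mul_of_nonneg_left ht2' hU0.le
      have := arith2 ηU ηV γ (1 - (star ψU ⬝ᵥ FU.mulVec ψU).re)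
        (1 - (star ψV ⬝ᵥ FV.mulVec ψV).re) hU0 hV0 (by linarith) (by linarith) (by linarith)
        hcs hγV
      linarith
end
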